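/- Fix β* ∈ (√3/2, 1) as the unique root in that interval of the cubic 8β³ − 14β² − 6β + 11 = 0 (numerically β* ≈ 0.9079), and set r* = 1/(3 − 2β*). Define ν(β, r) = min{ r(1−β), −3/2 + 3β/2 + β²/(2(1+β)), 1/2 − r/2 } for β ∈ (√3/2, 1) and r ∈ (0,1). Then (β*, r*) maximizes ν over (√3/2,1)×(0,1), the maximal value ν(β*, r*) exceeds 0.077, and ν(β*, r*)/(2 − β*) > 1/15. -/
import Mathlib


/-- The exponent function `ν(β,r) = min{r(1−β), −3/2 + 3β/2 + β²/(2(1+β)), 1/2 − r/2}`. -/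
noncomputable def nuExp (β r : ℝ) : ℝ :=
  min (r * (1 - β)) (min (-(3 / 2) + 3 * β / 2 + β ^ 2 / (2 * (1 + β))) (1 / 2 - r / 2))

set_option maxHeartbeats 1000000 in
/-- the root `β*` of `8β³ − 14β² − 6β + 11` in `(√3/2, 1)` together with
`r* = 1/(3 − 2β*)` maximizes `ν` over `(√3/2,1)×(0,1)`, with `ν(β*,r*) > 0.077` and
`ν(β*,r*)/(2 − β*) > 1/15`. -/
theorem nuExp_maximized (βs rs : ℝ)
    (hβ : βs ∈ Set.Ioo (Real.sqrt 3 / 2) 1)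
    (hroot : 8 * βs ^ 3 - 14 * βs ^ 2 - 6 * βs + 11 = 0)
    (hrs : rs = 1 / (3 - 2 * βs)) :
    (∀ β ∈ Set.Ioo (Real.sqrt 3 / 2) 1, ∀ r ∈ Set.Ioo (0 : ℝ) 1, nuExp β r ≤ nuExp βs rs) ∧
    0.077 < nuExp βs rs ∧ 1 / 15 < nuExp βs rs / (2 - βs) := by
  obtain ⟨hβ1, hβ2⟩ := hβ
  have hs : (1.73 : ℝ) < Real.sqrt 3 := by
    have : (1.73 : ℝ) = Real.sqrt (1.73 ^ 2) := by
      rw [Real.sqrt_sq]; norm_num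
    rw [this]
    apply Real.sqrt_lt_sqrt <;> norm_num
  have hβlow : (0.865 : ℝ) < βs := by linarith
  -- numeric bounds on βs from the cubic
  have hb1 : (0.9078 : ℝ) < βs := by nlinarith [sq_nonneg (βs - 0.9078), sq_nonneg βs]
  have hb2 : βs < (0.9079 : ℝ) := by nlinarith [sq_nonneg (βs - 0.9079), sq_nonneg βs]
  have hden : (0 : ℝ) < 3 - 2 * βs := by linarith
  have hden2 : (0 : ℝ) < 2 * (1 + βs) := by linarith
  -- value at (βs, rs)
  have hval : nuExp βs rs = (1 - βs) / (3 - 2 * βs) := by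
    have e1 : rs * (1 - βs) = (1 - βs) / (3 - 2 * βs) := by
      rw [hrs]; field_simp
    have e2 : 1 / 2 - rs / 2 = (1 - βs) / (3 - 2 * βs) := by
      rw [hrs]; field_simp; ring
    have e3 : -(3 / 2) + 3 * βs / 2 + βs ^ 2 / (2 * (1 + βs)) = (1 - βs) / (3 - 2 * βs) := by
      field_simp
      linarith [hroot]
    rw [nuExp, e1, e2, e3, min_self, min_self]
  refine ⟨?_, ?_, ?_⟩
  · rintro β ⟨hb1', hb2'⟩ r ⟨hr1, hr2⟩
    have hβl : (0.865 : ℝ) < β := by linarith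
    have hd : (0 : ℝ) < 3 - 2 * β := by linarith
    have hd2 : (0 : ℝ) < 2 * (1 + β) := by linarith
    rw [hval]
    rcases le_total β βs with h | h
    · -- use q(β) ≤ q(βs) = f(βs)
      have hq : -(3 / 2) + 3 * β / 2 + β ^ 2 / (2 * (1 + β)) ≤ (1 - βs) / (3 - 2 * βs) := by
        have hqform : -(3 / 2) + 3 * β / 2 + β ^ 2 / (2 * (1 + β)) = (4 * β ^ 2 - 3) / (2 * (1 + β)) := by
          field_simp; ring
        rw [hqform, div_le_div_iff₀ hd2 hden]
        nlinarith [hroot, mul_nonneg (sub_nonneg.2 h) (sub_nonneg.2 h)]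
      calc nuExp β r ≤ _ := min_le_of_right_le (min_le_left _ _)
        _ ≤ _ := hq
    · -- use min(r(1-β), 1/2 - r/2) ≤ f(β) ≤ f(βs)
      have hfmono : (1 - β) / (3 - 2 * β) ≤ (1 - βs) / (3 - 2 * βs) := by
        rw [div_le_div_iff₀ hd hden]; nlinarith
      have hmin : min (r * (1 - β)) (1 / 2 - r / 2) ≤ (1 - β) / (3 - 2 * β) := by
        rcases le_total r (1 / (3 - 2 * β)) with hr | hr
        · apply le_trans (min_le_left _ _)
          rw [div_eq_mul_inv, ← one_div]
          have : 0 ≤ 1 - β := by linarith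
          nlinarith
        · apply le_trans (min_le_right _ _)
          rw [le_div_iff₀ hd]
          have : 1 / (3 - 2 * β) ≤ r := hr
          rw [div_le_iff₀ hd] at this
          nlinarith
      have : nuExp β r ≤ min (r * (1 - β)) (1 / 2 - r / 2) := by
        unfold nuExp
        rcases min_cases (r * (1 - β)) (1 / 2 - r / 2) with ⟨he, _⟩ | ⟨he, _⟩
        · rw [he]; exact min_le_left _ _
        · rw [he]; exact min_le_of_right_le (min_le_right _ _)
      linarith [hmin, hfmono, this]
  · rw [hval, lt_div_iff₀ hden]; nlinarith
  · rw [hval]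
    have h2 : (0 : ℝ) < 2 - βs := by linarith
    rw [div_div, lt_div_iff₀ (by positivity)]
    have hq : βs ^ 2 < 0.9079 * βs := by nlinarith
    nlinarith [hq]
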